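/- The marginal distribution of the McKean tree Markov chain equals the tree weights: if (τ_n)_{n≥1} is the Markov chain on trees with τ_1 = t_1 almost surely and transition probabilities P[τ_{n+1} = t_{n,k} | τ_n = t_n] = 1/n for each germination t_{n,k} obtained by appending the two-leaved tree at leaf k ∈ {1,…,n} of t_n (and 0 otherwise), then P[τ_n = t_n] = p_n(t_n) for every n ≥ 1 and every t_n ∈ 𝕋(n). -/

import Mathlib

/-- McKean binary trees. -/
inductive MTree where
  | leaf : MTree
  | node (l r : MTree) : MTree
deriving DecidableEq

/-- Number of leaves of a McKean tree. -/
def MTree.leaves : MTree → ℕ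
  | .leaf => 1
  | .node l r => l.leaves + r.leaves

/-- The weight `p_n(t_n)` of a McKean tree. -/
noncomputable def MTree.weight : MTree → ℝ
  | .leaf => 1
  | .node l r => (1 / ((MTree.node l r).leaves - 1 : ℝ)) * l.weight * r.weight

/-- Germination of a tree at its `k`-th leaf (0-indexed, left-to-right):
the `k`-th leaf is replaced by an internal node with two leaf children. -/
def MTree.germ : MTree → ℕ → MTree
  | .leaf, _ => .node .leaf .leaf
  | .node l r, k =>
      if k < l.leaves then .node (l.germ k) r else .node l (r.germ (k - l.leaves))

/-- Pruning: the inverse of germination. -/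
def MTree.prune : MTree → ℕ → MTree
  | .leaf, _ => .leaf
  | .node l r, k =>
      if l = .leaf ∧ r = .leaf then .leaf
      else if k + 1 < l.leaves then .node (l.prune k) r
      else .node l (r.prune (k - l.leaves))

lemma MTree.one_le_leaves (t : MTree) : 1 ≤ t.leaves := by
  induction t <;> simp [MTree.leaves] <;> omega

lemma MTree.germ_leaves (t : MTree) (k : ℕ) : (t.germ k).leaves = t.leaves + 1 := by
  induction t generalizing k with
  | leaf => simp [MTree.germ, MTree.leaves]
  | node l r ihl ihr =>
      by_cases h : k < l.leaves <;> simp [MTree.germ, h, MTree.leaves, ihl, ihr] <;> omega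

lemma MTree.germ_ne_leaf (t : MTree) (k : ℕ) : t.germ k ≠ .leaf := by
  cases t <;> simp [MTree.germ]
  split <;> simp

lemma MTree.germ_ne_self (t : MTree) (k : ℕ) : t.germ k ≠ t := by
  intro h
  have := congrArg MTree.leaves h
  rw [MTree.germ_leaves] at this
  omega

lemma MTree.prune_germ (t : MTree) (k : ℕ) (h : k < t.leaves) : (t.germ k).prune k = t := by
  induction t generalizing k with
  | leaf => simp [MTree.germ, MTree.prune]
  | node l r ihl ihr =>
      by_cases hk : k < l.leaves
      · have h1 : l.germ k ≠ MTree.leaf := l.germ_ne_leaf k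
        have h2 : k + 1 < (l.germ k).leaves := by rw [MTree.germ_leaves]; omega
        simp [MTree.germ, hk, MTree.prune, h1, h2, ihl k hk]
      · have h1 : r.germ (k - l.leaves) ≠ MTree.leaf := r.germ_ne_leaf _
        have h2 : ¬ (k + 1 < l.leaves) := by omega
        have h3 : k - l.leaves < r.leaves := by
          simp [MTree.leaves] at h; omega
        simp [MTree.germ, hk, MTree.prune, h1, h2, ihr _ h3]

lemma MTree.eq_prune {t s : MTree} {k : ℕ} (h : k < t.leaves) (hg : t.germ k = s) :
    t = s.prune k := by
  rw [← hg, MTree.prune_germ t k h]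

lemma MTree.leaves_eq_one {t : MTree} (h : t.leaves = 1) : t = .leaf := by
  cases t with
  | leaf => rfl
  | node l r =>
      have := l.one_le_leaves
      have := r.one_le_leaves
      simp [MTree.leaves] at h
      omega

lemma MTree.setFinite (n : ℕ) : {t : MTree | t.leaves = n}.Finite := by
  induction n using Nat.strong_induction_on with
  | _ n ih =>
    rcases Nat.eq_zero_or_pos n with h0 | h1
    · apply Set.Finite.subset (Set.finite_empty)
      intro t ht
      have := t.one_le_leaves
      simp at ht
      omega
    · apply Set.Finite.subset
        (s := insert MTree.leaf
          (⋃ a ∈ Finset.Ico 1 n, Set.image2 MTree.node {l : MTree | l.leaves = a}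
            {r : MTree | r.leaves = n - a}))
      · apply Set.Finite.insert
        apply Set.Finite.biUnion (Finset.Ico 1 n).finite_toSet
        intro a ha
        simp at ha
        exact Set.Finite.image2 _ (ih a ha.2) (ih (n - a) (by omega))
      · intro t ht
        simp only [Set.mem_setOf_eq] at ht
        cases t with
        | leaf => exact Set.mem_insert _ _
        | node l r =>
            refine Set.mem_insert_iff.2 (Or.inr ?_)
            have hl := l.one_le_leaves
            have hr := r.one_le_leaves
            simp only [MTree.leaves] at ht
            exact Set.mem_biUnion (show l.leaves ∈ ↑(Finset.Ico 1 n) by simp; omega)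
              (Set.mem_image2_of_mem rfl (by simp only [Set.mem_setOf_eq]; omega))

/-- Key combinatorial lemma: sum of weights of parents. -/
lemma MTree.sum_g (s : MTree) :
    ∑ k ∈ Finset.range (s.leaves - 1),
      (if (s.prune k).germ k = s then (s.prune k).weight else 0)
      = ((s.leaves : ℝ) - 1) * s.weight := by
  induction s with
  | leaf => simp [MTree.leaves, MTree.weight]
  | node L R ihL ihR =>
      by_cases hLR : L = MTree.leaf ∧ R = MTree.leaf
      · obtain ⟨rfl, rfl⟩ := hLR
        norm_num [MTree.leaves, MTree.prune, MTree.germ, MTree.weight]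
      · have ha := L.one_le_leaves
        have hb := R.one_le_leaves
        have h3 : 3 ≤ L.leaves + R.leaves := by
          by_contra h
          have hL1 : L.leaves = 1 := by omega
          have hR1 : R.leaves = 1 := by omega
          exact hLR ⟨MTree.leaves_eq_one hL1, MTree.leaves_eq_one hR1⟩
        have hD : ((L.leaves : ℝ) + R.leaves - 2) ≠ 0 := by
          have : (3 : ℝ) ≤ (L.leaves : ℝ) + R.leaves := by exact_mod_cast h3
          intro h; nlinarith
        have claim1 : ∀ k ∈ Finset.range (L.leaves - 1),
            (if ((MTree.node L R).prune k).germ k = MTree.node L R then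
              ((MTree.node L R).prune k).weight else 0)
            = R.weight / ((L.leaves : ℝ) + R.leaves - 2) *
              (if (L.prune k).germ k = L then (L.prune k).weight else 0) := by
          intro k hk
          simp only [Finset.mem_range] at hk
          have hk' : k + 1 < L.leaves := by omega
          have hpr : (MTree.node L R).prune k = MTree.node (L.prune k) R := by
            simp [MTree.prune, hLR, hk']
          by_cases hg : (L.prune k).germ k = L
          · have hlv : (L.prune k).leaves = L.leaves - 1 := by
              have := (L.prune k).germ_leaves k
              rw [hg] at this; omega
            have hklt : k < (L.prune k).leaves := by omega
            have hgerm : (MTree.node (L.prune k) R).germ k = MTree.node L R := by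
              simp [MTree.germ, hklt, hg]
            rw [hpr, hgerm, if_pos rfl, if_pos hg]
            show (1 / (((MTree.node (L.prune k) R).leaves : ℝ) - 1)) * (L.prune k).weight * R.weight = _
            have : ((MTree.node (L.prune k) R).leaves : ℝ) - 1 = (L.leaves : ℝ) + R.leaves - 2 := by
              simp only [MTree.leaves, hlv]
              push_cast [Nat.cast_sub ha]
              ring
            rw [this]
            field_simp
          · rw [hpr, if_neg, if_neg hg, mul_zero]
            intro hEq
            by_cases hk2 : k < (L.prune k).leaves
            · simp only [MTree.germ, if_pos hk2, MTree.node.injEq] at hEq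
              exact hg hEq.1
            · simp only [MTree.germ, if_neg hk2, MTree.node.injEq] at hEq
              exact (R.germ_ne_self _) hEq.2
        have claim2 :
            (if ((MTree.node L R).prune (L.leaves - 1)).germ (L.leaves - 1) = MTree.node L R then
              ((MTree.node L R).prune (L.leaves - 1)).weight else 0) = 0 := by
          have h1a : ¬ (L.leaves - 1 + 1 < L.leaves) := by omega
          have hpr : (MTree.node L R).prune (L.leaves - 1)
              = MTree.node L (R.prune (L.leaves - 1 - L.leaves)) := by
            simp [MTree.prune, hLR, h1a]
          rw [hpr, if_neg]
          intro hEq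
          have hlt : L.leaves - 1 < L.leaves := by omega
          simp only [MTree.germ, if_pos hlt, MTree.node.injEq] at hEq
          exact (L.germ_ne_self _) hEq.1
        have claim3 : ∀ j ∈ Finset.range (R.leaves - 1),
            (if ((MTree.node L R).prune (L.leaves + j)).germ (L.leaves + j) = MTree.node L R then
              ((MTree.node L R).prune (L.leaves + j)).weight else 0)
            = L.weight / ((L.leaves : ℝ) + R.leaves - 2) *
              (if (R.prune j).germ j = R then (R.prune j).weight else 0) := by
          intro j hj
          simp only [Finset.mem_range] at hj
          have hnk : ¬ (L.leaves + j + 1 < L.leaves) := by omega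
          have hsub : L.leaves + j - L.leaves = j := by omega
          have hpr : (MTree.node L R).prune (L.leaves + j) = MTree.node L (R.prune j) := by
            simp [MTree.prune, hLR, hnk, hsub]
          have hnk2 : ¬ (L.leaves + j < L.leaves) := by omega
          by_cases hg : (R.prune j).germ j = R
          · have hgerm : (MTree.node L (R.prune j)).germ (L.leaves + j) = MTree.node L R := by
              simp [MTree.germ, hnk2, hsub, hg]
            rw [hpr, hgerm, if_pos rfl, if_pos hg]
            have hlv : (R.prune j).leaves = R.leaves - 1 := by
              have := (R.prune j).germ_leaves j
              rw [hg] at this; omega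
            show (1 / (((MTree.node L (R.prune j)).leaves : ℝ) - 1)) * L.weight * (R.prune j).weight = _
            have : ((MTree.node L (R.prune j)).leaves : ℝ) - 1 = (L.leaves : ℝ) + R.leaves - 2 := by
              simp only [MTree.leaves, hlv]
              push_cast [Nat.cast_sub hb]
              ring
            rw [this]
            field_simp
          · rw [hpr, if_neg, if_neg hg, mul_zero]
            intro hEq
            simp only [MTree.germ, if_neg hnk2, hsub, MTree.node.injEq] at hEq
            exact hg hEq.2
        have hsplit : (MTree.node L R).leaves - 1 = (L.leaves - 1 + 1) + (R.leaves - 1) := by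
          simp only [MTree.leaves]; omega
        rw [hsplit, Finset.sum_range_add, Finset.sum_range_succ,
            Finset.sum_congr rfl claim1]
        have hrepl : ∀ j ∈ Finset.range (R.leaves - 1),
            (if ((MTree.node L R).prune (L.leaves - 1 + 1 + j)).germ (L.leaves - 1 + 1 + j)
                = MTree.node L R then
              ((MTree.node L R).prune (L.leaves - 1 + 1 + j)).weight else 0)
            = L.weight / ((L.leaves : ℝ) + R.leaves - 2) *
              (if (R.prune j).germ j = R then (R.prune j).weight else 0) := by
          intro j hj
          have : L.leaves - 1 + 1 + j = L.leaves + j := by omega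
          rw [this]
          exact claim3 j hj
        rw [Finset.sum_congr rfl hrepl, claim2, ← Finset.mul_sum, ← Finset.mul_sum,
            ihL, ihR]
        have hE : ((L.leaves : ℝ) + R.leaves - 1) ≠ 0 := by
          have : (3 : ℝ) ≤ (L.leaves : ℝ) + R.leaves := by exact_mod_cast h3
          intro h; nlinarith
        simp only [MTree.weight, MTree.leaves]
        push_cast [Nat.cast_sub ha, Nat.cast_sub hb]
        field_simp
        ring

/-- The marginal law of the germination Markov chain on McKean trees equals the
tree weights: if `P n t` denotes `P[τ_n = t]`, where `τ_1` is the one-leaf tree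
a.s. and each transition appends the two-leaved tree at a leaf chosen uniformly
among the `n` leaves, then `P n t = p_n(t)` for every tree `t` with `n` leaves. -/
theorem mckean_chain_marginal
    (P : ℕ → MTree → ℝ)
    (h1 : ∀ t : MTree, P 1 t = if t = MTree.leaf then 1 else 0)
    (hrec : ∀ n : ℕ, 1 ≤ n → ∀ s : MTree,
      P (n + 1) s =
        ∑' t : {t : MTree // t.leaves = n},
          (((Finset.range n).filter fun k => (t : MTree).germ k = s).card : ℝ) / n
            * P n t) :
    ∀ n : ℕ, 1 ≤ n → ∀ t : MTree, t.leaves = n → P n t = t.weight := by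
  intro n hn
  induction n, hn using Nat.le_induction with
  | base =>
      intro t ht
      have := MTree.leaves_eq_one ht
      subst this
      rw [h1]
      simp [MTree.weight]
  | succ n hn ih =>
      intro s hs
      rw [hrec n hn s]
      haveI : Fintype {t : MTree // t.leaves = n} := (MTree.setFinite n).fintype
      rw [tsum_fintype]
      have hterm : ∀ t : {t : MTree // t.leaves = n},
          (((Finset.range n).filter fun k => (t : MTree).germ k = s).card : ℝ) / n
            * P n ↑t
          = ∑ k ∈ Finset.range n,
              (if (t : MTree).germ k = s then (t : MTree).weight / n else 0) := by
        intro t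
        rw [ih ↑t t.2, Finset.card_filter, Nat.cast_sum, Finset.sum_div, Finset.sum_mul]
        refine Finset.sum_congr rfl fun k _ => ?_
        split <;> (push_cast; ring)
      rw [Finset.sum_congr rfl fun t _ => hterm t, Finset.sum_comm]
      have key : ∀ k ∈ Finset.range n,
          (∑ t : {t : MTree // t.leaves = n},
              (if (t : MTree).germ k = s then (t : MTree).weight / n else 0))
          = (if (s.prune k).germ k = s then (s.prune k).weight else 0) / n := by
        intro k hk
        simp only [Finset.mem_range] at hk
        by_cases hp : (s.prune k).germ k = s
        · have hlv : (s.prune k).leaves = n := by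
            have := (s.prune k).germ_leaves k
            rw [hp] at this
            omega
          rw [Finset.sum_eq_single (⟨s.prune k, hlv⟩ : {t : MTree // t.leaves = n})]
          · rw [if_pos hp, if_pos hp]
          · intro b _ hb
            rw [if_neg]
            intro hgb
            apply hb
            apply Subtype.ext
            exact MTree.eq_prune (by rw [b.2]; exact hk) hgb
          · intro h
            exact absurd (Finset.mem_univ _) h
        · rw [if_neg hp, zero_div]
          refine Finset.sum_eq_zero fun b _ => ?_
          rw [if_neg]
          intro hgb
          have := MTree.eq_prune (t := (b : MTree)) (by rw [b.2]; exact hk) hgb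
          rw [← this] at hp
          exact hp hgb
      rw [Finset.sum_congr rfl key, ← Finset.sum_div]
      have hrange : n = s.leaves - 1 := by omega
      rw [hrange, MTree.sum_g s, hs]
      have hn' : s.leaves - 1 = n := by omega
      have hn0 : ((s.leaves - 1 : ℕ) : ℝ) ≠ 0 := by
        rw [hn']
        exact Nat.cast_ne_zero.mpr (by omega)
      push_cast
      field_simp
      ring
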